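/- (Theorem B) Let M be a finite subset of a countable surjunctive group G. Let A be a finite alphabet and S = A^(A^M). Suppose that σ_s : A^G → A^G is stably injective for some s ∈ S^G with uniformly bounded singularity. Then σ_s is stably invertible. -/
import Mathlib


open Function Set Pointwise

section Defs

variable {G A S : Type*} [Group G]

/-- The NUCA `σ_s : A^G → A^G` determined by the configuration of local
defining maps `s ∈ S^G`, `S = A^(A^M)`:
`σ_s(x)(g) = s(g)((g⁻¹x)|_M)` where `(g⁻¹x)(h) = x(gh)`. -/
def nuca {M : Finset G} (s : G → ((M → A) → A)) : (G → A) → (G → A) :=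
  fun x g => s g fun m => x (g * (m : G))

/-- The closure, in the prodiscrete topology on `S^G`, of the shift orbit
`{gs : g ∈ G}`, where `(gs)(h) = s(g⁻¹h)`. -/
def orbitClosure (s : G → S) : Set (G → S) :=
  @closure (G → S) (@Pi.topologicalSpace G (fun _ => S) fun _ => ⊥)
    {p | ∃ g : G, p = fun h => s (g⁻¹ * h)}

/-- `τ` is a NUCA with finite memory. -/
def IsNUCAFin (τ : (G → A) → (G → A)) : Prop :=
  ∃ (M : Finset G) (s : G → ((M → A) → A)), τ = nuca s

/-- `τ` is invertible: it is bijective and its inverse is a NUCA with finite memory. -/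
def IsInvertibleNUCA (τ : (G → A) → (G → A)) : Prop :=
  Function.Bijective τ ∧ ∃ ρ : (G → A) → (G → A), IsNUCAFin ρ ∧
    Function.LeftInverse ρ τ ∧ Function.RightInverse ρ τ

/-- `σ_s` is stably injective: `σ_p` is injective for every `p ∈ Σ(s)`. -/
def StablyInjective {M : Finset G} (s : G → ((M → A) → A)) : Prop :=
  ∀ p ∈ orbitClosure s, Function.Injective (nuca p)

/-- `σ_s` is stably invertible. -/
def StablyInvertible {M : Finset G} (s : G → ((M → A) → A)) : Prop :=
  ∃ (N : Finset G) (t : G → ((N → A) → A)),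
    ∀ p ∈ orbitClosure s, ∃ q ∈ orbitClosure t,
      nuca p ∘ nuca q = id ∧ nuca q ∘ nuca p = id

/-- Two configurations are asymptotic if they agree outside a finite set. -/
def Asymptotic (x y : G → S) : Prop :=
  ∃ Ω : Finset G, ∀ g ∉ Ω, x g = y g

/-- `s` is asymptotically constant. -/
def AsymptoticallyConstant (s : G → S) : Prop :=
  ∃ c : S, Asymptotic s fun _ => c

/-- `τ` is pre-injective. -/
def PreInjective (τ : (G → A) → (G → A)) : Prop :=
  ∀ x y : G → A, Asymptotic x y → τ x = τ y → x = y

/-- `τ` is post-surjective. -/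
def PostSurjective (τ : (G → A) → (G → A)) : Prop :=
  ∀ x y : G → A, Asymptotic y (τ x) → ∃ z : G → A, Asymptotic z x ∧ τ z = y

/-- `σ_s` is stably post-surjective: `σ_p` is post-surjective for all `p ∈ Σ(s)`. -/
def StablyPostSurjective {M : Finset G} (s : G → ((M → A) → A)) : Prop :=
  ∀ p ∈ orbitClosure s, PostSurjective (nuca p)

/-- `τ` is a cellular automaton: a NUCA with finite memory and a constant
configuration of local defining maps. -/
def IsCellularAutomaton (τ : (G → A) → (G → A)) : Prop :=
  ∃ (M : Finset G) (μ : (M → A) → A), τ = nuca fun _ : G => μ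

/-- `G` is surjunctive: over every finite alphabet, injective CA are surjective. -/
def Surjunctive (G : Type*) [Group G] : Prop :=
  ∀ (B : Type) [Fintype B] (τ : (G → B) → (G → B)),
    IsCellularAutomaton τ → Function.Injective τ → Function.Surjective τ

/-- `G` is post-injunctive: over every finite alphabet, post-surjective CA are
pre-injective. -/
def PostInjunctive (G : Type*) [Group G] : Prop :=
  ∀ (B : Type) [Fintype B] (τ : (G → B) → (G → B)),
    IsCellularAutomaton τ → PostSurjective τ → PreInjective τ

/-- `s` has uniformly bounded singularity: for every finite symmetric `E ∋ 1`
there is a finite `F ⊇ E` such that `s` is constant on `FE ∖ F`. -/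
def UniformlyBoundedSingularity (s : G → S) : Prop :=
  ∀ E : Finset G, (1 : G) ∈ E → (∀ g ∈ E, g⁻¹ ∈ E) →
    ∃ F : Finset G, E ⊆ F ∧ ∃ c : S,
      ∀ g ∈ ((F : Set G) * (E : Set G)) \ (F : Set G), s g = c

end Defs


section Aux
open Filter Topology

variable {G : Type*} [Group G]

/-- Shift action on configurations. -/
def shAct {X : Type*} (a : G) (x : G → X) : G → X := fun h => x (a⁻¹ * h)

lemma shAct_shAct {X : Type*} (a b : G) (x : G → X) :
    shAct a (shAct b x) = shAct (a * b) x := by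
  funext h; simp [shAct, mul_assoc]

lemma shAct_one {X : Type*} (x : G → X) : shAct (1 : G) x = x := by
  funext h; simp [shAct]

variable {A : Type*} {M : Finset G}

lemma nuca_congr {p p' : G → ((M → A) → A)} {x x' : G → A} {g : G}
    (hp : p g = p' g) (hx : ∀ m : M, x (g * (m : G)) = x' (g * (m : G))) :
    nuca p x g = nuca p' x' g := by
  show p g (fun m => x (g * (m : G))) = p' g (fun m => x' (g * (m : G)))
  rw [hp]; congr 1; funext m; exact hx m

lemma nuca_shAct (p : G → ((M → A) → A)) (x : G → A) (a : G) :
    nuca (shAct a p) (shAct a x) = shAct a (nuca p x) := by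
  funext g
  show p (a⁻¹ * g) (fun m => x (a⁻¹ * (g * (m : G)))) = p (a⁻¹ * g) (fun m => x ((a⁻¹ * g) * (m : G)))
  congr 1; funext m; rw [mul_assoc]

lemma mem_piClosure_iff {X : Type*} {T : Set (G → X)} {x : G → X} :
    x ∈ @closure (G → X) (@Pi.topologicalSpace G (fun _ => X) fun _ => ⊥) T ↔
      ∀ Δ : Finset G, ∃ y ∈ T, ∀ g ∈ Δ, y g = x g := by
  letI : TopologicalSpace X := ⊥
  haveI : DiscreteTopology X := ⟨rfl⟩
  constructor
  · intro hx Δ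
    have hU : IsOpen {y : G → X | ∀ g ∈ Δ, y g = x g} := by
      have he : {y : G → X | ∀ g ∈ Δ, y g = x g} = Set.pi (Δ : Set G) (fun g => {x g}) := by
        ext y; simp [Set.mem_pi]
      rw [he]
      exact isOpen_set_pi Δ.finite_toSet (fun a _ => isOpen_discrete _)
    obtain ⟨y, hy1, hy2⟩ := mem_closure_iff.mp hx _ hU (fun g _ => rfl)
    exact ⟨y, hy2, hy1⟩
  · intro h
    rw [mem_closure_iff]
    intro U hU hxU
    obtain ⟨I, u, hu, hsub⟩ := isOpen_pi_iff.mp hU x hxU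
    obtain ⟨y, hyT, hy⟩ := h I
    refine ⟨y, hsub ?_, hyT⟩
    intro g hg
    rw [hy g hg]
    exact (hu g hg).2

lemma mem_orbitClosure_iff {X : Type*} (s p : G → X) :
    p ∈ orbitClosure s ↔ ∀ Δ : Finset G, ∃ a : G, ∀ h ∈ Δ, s (a⁻¹ * h) = p h := by
  rw [orbitClosure, mem_piClosure_iff]
  constructor
  · intro h Δ; obtain ⟨y, ⟨a, rfl⟩, hy⟩ := h Δ; exact ⟨a, hy⟩
  · intro h Δ; obtain ⟨a, ha⟩ := h Δ; exact ⟨_, ⟨a, rfl⟩, ha⟩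

lemma self_mem_orbitClosure {X : Type*} (s : G → X) : s ∈ orbitClosure s := by
  rw [mem_orbitClosure_iff]; exact fun Δ => ⟨1, fun h _ => by simp⟩

lemma shAct_mem_orbitClosure {X : Type*} {s p : G → X} (hp : p ∈ orbitClosure s) (a : G) :
    shAct a p ∈ orbitClosure s := by
  classical
  rw [mem_orbitClosure_iff] at hp ⊢
  intro Δ
  obtain ⟨b, hb⟩ := hp (Finset.image (fun h => a⁻¹ * h) Δ)
  refine ⟨a * b, fun h hh => ?_⟩
  have hx := hb (a⁻¹ * h) (Finset.mem_image_of_mem _ hh)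
  show s ((a * b)⁻¹ * h) = p (a⁻¹ * h)
  rw [mul_inv_rev, mul_assoc]; exact hx

lemma mem_orbitClosure_of_approx {X : Type*} {s p : G → X}
    (h : ∀ Δ : Finset G, ∃ q, q ∈ orbitClosure s ∧ ∀ g ∈ Δ, q g = p g) :
    p ∈ orbitClosure s := by
  rw [mem_orbitClosure_iff]
  intro Δ
  obtain ⟨q, hq, hqp⟩ := h Δ
  obtain ⟨a, ha⟩ := (mem_orbitClosure_iff s q).mp hq Δ
  exact ⟨a, fun g hg => (ha g hg).trans (hqp g hg)⟩

lemma exists_subseq_limit {X : Type*} [Finite X] [Countable G] (u : ℕ → G → X) :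
    ∃ φ : ℕ → ℕ, StrictMono φ ∧ ∃ w : G → X, ∀ g : G, ∀ᶠ j in atTop, u (φ j) g = w g := by
  letI : TopologicalSpace X := ⊥
  haveI : DiscreteTopology X := ⟨rfl⟩
  obtain ⟨a, -, φ, hφ, hconv⟩ :=
    IsCompact.tendsto_subseq (isCompact_univ : IsCompact (Set.univ : Set (G → X)))
      (fun n => Set.mem_univ (u n))
  refine ⟨φ, hφ, a, fun g => ?_⟩
  have h1 : Tendsto (fun j => u (φ j) g) atTop (𝓝 (a g)) :=
    ((continuous_apply g).tendsto a).comp hconv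
  rw [nhds_discrete X] at h1
  exact tendsto_pure.mp h1

end Aux

section Aux2
open Filter Topology

variable {G : Type*} [Group G] {A : Type*} {M : Finset G}

lemma exists_uniform_window [Countable G] [Finite A] [DecidableEq G]
    {s : G → ((M → A) → A)} (hinj : StablyInjective s) :
    ∃ N : Finset G, ∀ p p', p ∈ orbitClosure s → p' ∈ orbitClosure s →
      ∀ z z' : G → A, (∀ h ∈ N, p h = p' h) → (∀ h ∈ N, nuca p z h = nuca p' z' h) →
      z 1 = z' 1 := by
  by_contra hcon
  push_neg at hcon
  haveI : Nonempty G := ⟨1⟩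
  obtain ⟨e, he⟩ := exists_surjective_nat G
  set Nf : ℕ → Finset G := fun j => Finset.image e (Finset.range j) with hNf
  choose p p' hp hp' z z' hagree hagreeσ hne using fun j => hcon (Nf j)
  set u : ℕ → G → (((M → A) → A) × ((M → A) → A) × A × A) :=
    fun j g => (p j g, p' j g, z j g, z' j g) with hu
  obtain ⟨φ, hφ, w, hw⟩ := exists_subseq_limit u
  set P : G → ((M → A) → A) := fun g => (w g).1 with hP
  set P' : G → ((M → A) → A) := fun g => (w g).2.1 with hP'
  set Z : G → A := fun g => (w g).2.2.1 with hZ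
  set Z' : G → A := fun g => (w g).2.2.2 with hZ'
  have hPg : ∀ g, ∀ᶠ j in atTop, p (φ j) g = P g :=
    fun g => (hw g).mono (fun j hj => congrArg Prod.fst hj)
  have hP'g : ∀ g, ∀ᶠ j in atTop, p' (φ j) g = P' g :=
    fun g => (hw g).mono (fun j hj => congrArg (fun t => t.2.1) hj)
  have hZg : ∀ g, ∀ᶠ j in atTop, z (φ j) g = Z g :=
    fun g => (hw g).mono (fun j hj => congrArg (fun t => t.2.2.1) hj)
  have hZ'g : ∀ g, ∀ᶠ j in atTop, z' (φ j) g = Z' g :=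
    fun g => (hw g).mono (fun j hj => congrArg (fun t => t.2.2.2) hj)
  have hφT : Tendsto φ atTop atTop := hφ.tendsto_atTop
  have hmem : ∀ g : G, ∀ᶠ j in atTop, g ∈ Nf (φ j) := by
    intro g
    obtain ⟨i, rfl⟩ := he g
    refine hφT.eventually (p := fun j => e i ∈ Nf j) ?_
    filter_upwards [eventually_ge_atTop (i + 1)] with j hj
    exact Finset.mem_image_of_mem e (Finset.mem_range.mpr (by omega))
  have hPP' : ∀ g, P g = P' g := by
    intro g
    obtain ⟨j, h1, h2, h3⟩ := ((hPg g).and ((hP'g g).and (hmem g))).exists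
    rw [← h1, ← h2]
    exact hagree (φ j) g h3
  have hPK : P ∈ orbitClosure s := by
    apply mem_orbitClosure_of_approx
    intro Δ
    have hev : ∀ᶠ j in atTop, ∀ g ∈ Δ, p (φ j) g = P g :=
      (Finset.eventually_all Δ).mpr (fun g _ => hPg g)
    obtain ⟨j, hj⟩ := hev.exists
    exact ⟨p (φ j), hp (φ j), hj⟩
  have hσ : nuca P Z = nuca P Z' := by
    funext g
    have hev : ∀ᶠ j in atTop,
        (g ∈ Nf (φ j) ∧ p (φ j) g = P g ∧ p' (φ j) g = P' g) ∧
        (∀ m ∈ M, z (φ j) (g * m) = Z (g * m)) ∧ (∀ m ∈ M, z' (φ j) (g * m) = Z' (g * m)) :=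
      (((hmem g).and ((hPg g).and (hP'g g))).and
        (((Finset.eventually_all M).mpr (fun m _ => hZg (g * m))).and
         ((Finset.eventually_all M).mpr (fun m _ => hZ'g (g * m)))))
    obtain ⟨j, ⟨hjm, hjp, hjp'⟩, hjz, hjz'⟩ := hev.exists
    calc nuca P Z g = nuca (p (φ j)) (z (φ j)) g :=
          (nuca_congr hjp (fun m => hjz m m.2)).symm
      _ = nuca (p' (φ j)) (z' (φ j)) g := hagreeσ (φ j) g hjm
      _ = nuca P Z' g := nuca_congr (hjp'.trans (hPP' g).symm) (fun m => hjz' m m.2)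
  have hZZ' : Z 1 ≠ Z' 1 := by
    obtain ⟨j, h1, h2⟩ := ((hZg 1).and (hZ'g 1)).exists
    rw [← h1, ← h2]
    exact hne (φ j)
  exact hZZ' (congrFun (hinj P hPK hσ) 1)

lemma surjective_of_dense [Countable G] [Finite A] [DecidableEq G]
    (p : G → ((M → A) → A))
    (h : ∀ (y : G → A) (Δ : Finset G), ∃ x, ∀ g ∈ Δ, nuca p x g = y g) :
    Surjective (nuca p) := by
  intro y
  haveI : Nonempty G := ⟨1⟩
  obtain ⟨e, he⟩ := exists_surjective_nat G
  choose x hx using fun j => h y (Finset.image e (Finset.range j))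
  obtain ⟨φ, hφ, X, hX⟩ := exists_subseq_limit x
  have hφT : Tendsto φ atTop atTop := hφ.tendsto_atTop
  refine ⟨X, funext fun g => ?_⟩
  obtain ⟨i, rfl⟩ := he g
  have hev : ∀ᶠ j in atTop,
      (e i ∈ Finset.image e (Finset.range (φ j))) ∧
      (∀ m ∈ M, x (φ j) (e i * m) = X (e i * m)) := by
    refine (hφT.eventually (p := fun k => e i ∈ Finset.image e (Finset.range k)) ?_).and
      ((Finset.eventually_all M).mpr (fun m _ => hX (e i * m)))
    filter_upwards [eventually_ge_atTop (i + 1)] with k hk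
    exact Finset.mem_image_of_mem e (Finset.mem_range.mpr (by omega))
  obtain ⟨j, hj1, hj2⟩ := hev.exists
  calc nuca p X (e i) = nuca p (x (φ j)) (e i) :=
        (nuca_congr rfl (fun m => hj2 m m.2)).symm
    _ = y (e i) := hx (φ j) (e i) hj1

lemma surjective_of_injective_of_id_off {A : Type*} [Finite A] (τ : (G → A) → (G → A))
    (Ω : Finset G) (hinj : Function.Injective τ) (hid : ∀ x g, g ∉ Ω → τ x g = x g) :
    Surjective τ := by
  classical
  intro y
  set ext : (Ω → A) → G → A := fun u g => if h : g ∈ Ω then u ⟨g, h⟩ else y g with hext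
  set Φ : (Ω → A) → (Ω → A) := fun u k => τ (ext u) k with hΦ
  have hΦinj : Function.Injective Φ := by
    intro u u' huu
    have hτ : τ (ext u) = τ (ext u') := by
      funext g
      by_cases hg : g ∈ Ω
      · exact congrFun huu ⟨g, hg⟩
      · rw [hid _ _ hg, hid _ _ hg]; simp [hext, hg]
    have h2 := hinj hτ
    funext k
    have h3 := congrFun h2 k
    simpa [hext] using h3
  obtain ⟨u, hu⟩ := Finite.injective_iff_surjective.mp hΦinj (fun k => y k)
  refine ⟨ext u, funext fun g => ?_⟩
  by_cases hg : g ∈ Ω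
  · exact congrFun hu ⟨g, hg⟩
  · rw [hid _ _ hg]; simp [hext, hg]

end Aux2

section Aux3
open Filter Topology

variable {G : Type*} [Group G] [DecidableEq G]

lemma exists_boundary {E : Finset G} (h1 : (1 : G) ∈ E)
    (hinf : ¬ ((Subgroup.closure (E : Set G) : Set G).Finite))
    {F : Finset G} (hF : F.Nonempty) : ∃ g ∈ F * E, g ∉ F := by
  by_contra hcon
  push_neg at hcon
  apply hinf
  obtain ⟨f₀, hf₀⟩ := hF
  have key : ∀ g ∈ Subgroup.closure (E : Set G), ∀ f ∈ F, f * g ∈ F := by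
    intro g hg
    induction hg using Subgroup.closure_induction with
    | mem x hx => exact fun f hf => hcon _ (Finset.mul_mem_mul hf hx)
    | one => intro f hf; simpa using hf
    | mul x y hx hy ihx ihy =>
        intro f hf
        rw [← mul_assoc]
        exact ihy _ (ihx f hf)
    | inv x hx ih =>
        intro f hf
        have hsub : Finset.image (· * x) F ⊆ F := by
          intro a ha
          obtain ⟨b, hb, rfl⟩ := Finset.mem_image.mp ha
          exact ih b hb
        have hcard : F.card ≤ (Finset.image (· * x) F).card := by
          rw [Finset.card_image_of_injective F (mul_left_injective x)]
        have himg : Finset.image (· * x) F = F := Finset.eq_of_subset_of_card_le hsub hcard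
        have : f ∈ Finset.image (· * x) F := himg.symm ▸ hf
        obtain ⟨b, hb, hbx⟩ := Finset.mem_image.mp this
        have : f * x⁻¹ = b := by rw [← hbx]; simp
        rw [this]; exact hb
  have hmaps : ((fun g => f₀ * g) '' (Subgroup.closure (E : Set G) : Set G)) ⊆ (F : Set G) := by
    rintro - ⟨g, hg, rfl⟩
    exact key g hg f₀ hf₀
  exact Set.Finite.of_finite_image (F.finite_toSet.subset hmaps) ((mul_right_injective f₀).injOn)

/-- An exhausting sequence of symmetric finite subsets containing `1`, `M`, `M⁻¹`. -/
def Eseq (e : ℕ → G) (M : Finset G) (n : ℕ) : Finset G :=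
  insert (1 : G) ((M ∪ M⁻¹) ∪
    (Finset.image e (Finset.range (n + 1)) ∪ (Finset.image e (Finset.range (n + 1)))⁻¹))

lemma Eseq_one (e : ℕ → G) (M : Finset G) (n : ℕ) : (1 : G) ∈ Eseq e M n :=
  Finset.mem_insert_self _ _

lemma Eseq_M (e : ℕ → G) (M : Finset G) (n : ℕ) {m : G} (hm : m ∈ M) : m ∈ Eseq e M n := by
  simp [Eseq, hm]

lemma Eseq_Minv (e : ℕ → G) (M : Finset G) (n : ℕ) {m : G} (hm : m ∈ M) :
    m⁻¹ ∈ Eseq e M n := by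
  have : m⁻¹ ∈ M⁻¹ := Finset.inv_mem_inv hm
  simp [Eseq, this]

lemma Eseq_symm (e : ℕ → G) (M : Finset G) (n : ℕ) {g : G} (hg : g ∈ Eseq e M n) :
    g⁻¹ ∈ Eseq e M n := by
  simp only [Eseq, Finset.mem_insert, Finset.mem_union] at hg ⊢
  rcases hg with rfl | (hg | hg) | (hg | hg)
  · left; simp
  · right; left; right; exact Finset.inv_mem_inv hg
  · right; left; left
    obtain ⟨b, hb, rfl⟩ := Finset.mem_inv.mp hg
    simpa using hb
  · right; right; right; exact Finset.inv_mem_inv hg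
  · right; right; left
    obtain ⟨b, hb, rfl⟩ := Finset.mem_inv.mp hg
    simpa using hb

lemma Eseq_mono (e : ℕ → G) (M : Finset G) {n n' : ℕ} (h : n ≤ n') :
    Eseq e M n ⊆ Eseq e M n' := by
  apply Finset.insert_subset_insert
  apply Finset.union_subset_union (le_refl _)
  apply Finset.union_subset_union
  · exact Finset.image_subset_image (Finset.range_subset_range.mpr (by omega))
  · exact Finset.inv_subset_inv (Finset.image_subset_image (Finset.range_subset_range.mpr (by omega)))

lemma Eseq_exhaust {e : ℕ → G} (he : Function.Surjective e) (M : Finset G) (g : G) :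
    ∃ i : ℕ, ∀ n, i ≤ n → g ∈ Eseq e M n := by
  obtain ⟨i, rfl⟩ := he g
  refine ⟨i, fun n hn => ?_⟩
  have : e i ∈ Finset.image e (Finset.range (n + 1)) :=
    Finset.mem_image_of_mem e (Finset.mem_range.mpr (by omega))
  simp [Eseq, this]

lemma Eseq_exhaust_finset {e : ℕ → G} (he : Function.Surjective e) (M : Finset G)
    (Δ : Finset G) : ∃ i : ℕ, ∀ n, i ≤ n → ∀ g ∈ Δ, g ∈ Eseq e M n := by
  choose i hi using fun g => Eseq_exhaust he M g
  refine ⟨Δ.sup i, fun n hn g hg => hi g n (le_trans (Finset.le_sup hg) hn)⟩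

end Aux3

section Aux4
open Filter Topology

variable {G : Type*} [Group G] {A : Type*} {M : Finset G}

/-- Locally finite case: injective NUCA are surjective, via coset decomposition. -/
lemma caseA_surjective [Nonempty A] [Finite A] {p : G → ((M → A) → A)}
    (H : Subgroup G) (hHfin : (H : Set G).Finite) (hMH : ∀ m : M, (m : G) ∈ H)
    (hpinj : Function.Injective (nuca p)) : Surjective (nuca p) := by
  classical
  haveI : Inhabited A := Classical.inhabited_of_nonempty ‹_›
  haveI : Finite (H : Set G) := hHfin.to_subtype
  haveI : Finite H := by exact ‹Finite (H : Set G)›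
  intro y
  have key : ∀ g₀ : G, ∃ xc : G → A, ∀ k : G, k ∈ H → nuca p xc (g₀ * k) = y (g₀ * k) := by
    intro g₀
    set xext : (H → A) → G → A :=
      fun u g => if h : g₀⁻¹ * g ∈ H then u ⟨g₀⁻¹ * g, h⟩ else default with hxext
    set Ψ : (H → A) → (H → A) := fun u k => nuca p (xext u) (g₀ * k) with hΨ
    have hinjΨ : Function.Injective Ψ := by
      intro u u' huu
      have hfull : nuca p (xext u) = nuca p (xext u') := by
        funext g
        by_cases hg : g₀⁻¹ * g ∈ H
        · have h1 : g = g₀ * ((⟨g₀⁻¹ * g, hg⟩ : H) : G) := by simp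
          rw [h1]
          exact congrFun huu ⟨g₀⁻¹ * g, hg⟩
        · refine nuca_congr rfl ?_
          intro m
          have hm : ¬ (g₀⁻¹ * (g * (m : G)) ∈ H) := by
            intro hmem
            have he1 : g₀⁻¹ * g = (g₀⁻¹ * (g * (m : G))) * (m : G)⁻¹ := by group
            exact hg (he1 ▸ H.mul_mem hmem (H.inv_mem (hMH m)))
          simp [hxext, hg, hm]
      have h2 := hpinj hfull
      funext k
      have h3 := congrFun h2 (g₀ * k)
      have hk : g₀⁻¹ * (g₀ * (k : G)) ∈ H := by simpa using k.2
      simp only [hxext, dif_pos hk] at h3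
      simpa using h3
    obtain ⟨u, hu⟩ := Finite.injective_iff_surjective.mp hinjΨ (fun k => y (g₀ * k))
    refine ⟨xext u, fun k hk => ?_⟩
    exact congrFun hu ⟨k, hk⟩
  have key2 : ∀ C : G ⧸ H, ∃ xc : G → A, ∀ g : G, QuotientGroup.mk g = C → nuca p xc g = y g := by
    intro C
    induction C using QuotientGroup.induction_on with
    | H g₀ =>
      obtain ⟨xc, hxc⟩ := key g₀
      refine ⟨xc, fun g hg => ?_⟩
      have hk : g₀⁻¹ * g ∈ H := QuotientGroup.eq.mp hg.symm
      have := hxc (g₀⁻¹ * g) hk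
      simpa [mul_inv_cancel_left] using this
  choose ξ hξ using key2
  refine ⟨fun g => ξ (QuotientGroup.mk g) g, funext fun g => ?_⟩
  have hloc : nuca p (fun g' => ξ (QuotientGroup.mk g') g') g = nuca p (ξ (QuotientGroup.mk g)) g := by
    refine nuca_congr rfl ?_
    intro m
    have hq : (QuotientGroup.mk (g * (m : G)) : G ⧸ H) = QuotientGroup.mk g := by
      rw [QuotientGroup.eq]
      have : (g * (m : G))⁻¹ * g = (m : G)⁻¹ := by group
      rw [this]
      exact H.inv_mem (hMH m)
    rw [hq]
  rw [hloc]
  exact hξ (QuotientGroup.mk g) g rfl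

/-- Surjectivity of `σ_s` propagates to all `σ_p`, `p ∈ Σ(s)`. -/
lemma surj_all [Countable G] [Finite A] [DecidableEq G] {s : G → ((M → A) → A)}
    (hs : Surjective (nuca s)) : ∀ p ∈ orbitClosure s, Surjective (nuca p) := by
  have hshift : ∀ a : G, Surjective (nuca (shAct a s)) := by
    intro a y
    obtain ⟨x₀, hx₀⟩ := hs (shAct a⁻¹ y)
    refine ⟨shAct a x₀, ?_⟩
    rw [nuca_shAct, hx₀, shAct_shAct, mul_inv_cancel, shAct_one]
  intro p hp
  apply surjective_of_dense
  intro y Δ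
  obtain ⟨a, ha⟩ := (mem_orbitClosure_iff s p).mp hp Δ
  obtain ⟨x, hx⟩ := hshift a y
  refine ⟨x, fun g hg => ?_⟩
  have hrule : p g = shAct a s g := (ha g hg).symm
  calc nuca p x g = nuca (shAct a s) x g := nuca_congr hrule (fun _ => rfl)
    _ = y g := congrFun hx g
end Aux4

section Aux5
open Filter Topology

variable {G : Type*} [Group G] [DecidableEq G] {A : Type*} {M : Finset G}

lemma Eseq_self_sub_cube (e : ℕ → G) (M : Finset G) (n : ℕ) :
    Eseq e M n ⊆ Eseq e M n * Eseq e M n * Eseq e M n := by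
  intro g hg
  have h := Finset.mul_mem_mul (Finset.mul_mem_mul hg (Eseq_one e M n)) (Eseq_one e M n)
  simpa using h

lemma exists_good_data {s : G → ((M → A) → A)}
    (hubs : UniformlyBoundedSingularity s) (e : ℕ → G)
    {n₀ : ℕ} (hinf : ∀ n, n₀ ≤ n →
      ¬ ((Subgroup.closure ((Eseq e M n : Finset G) : Set G) : Set G).Finite))
    (n : ℕ) (hn : n₀ ≤ n) :
    ∃ (c : (M → A) → A) (F : Finset G) (gg : G),
      (Eseq e M n * Eseq e M n * Eseq e M n) ⊆ F ∧
      (∀ g ∈ ((F : Set G) * ((Eseq e M n * Eseq e M n * Eseq e M n : Finset G) : Set G)) \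
          (F : Set G), s g = c) ∧
      (∀ h ∈ Eseq e M n, s (gg * h) = c) := by
  set E := Eseq e M n with hE
  have h1E : (1 : G) ∈ E := Eseq_one e M n
  have h1E3 : (1 : G) ∈ E * E * E := by
    have := Finset.mul_mem_mul (Finset.mul_mem_mul h1E h1E) h1E
    simpa using this
  have hsymE3 : ∀ g ∈ E * E * E, g⁻¹ ∈ E * E * E := by
    intro g hg
    obtain ⟨y, hy, z, hz, rfl⟩ := Finset.mem_mul.mp hg
    obtain ⟨a, ha, b, hb, rfl⟩ := Finset.mem_mul.mp hy
    have : (a * b * z)⁻¹ = z⁻¹ * b⁻¹ * a⁻¹ := by group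
    rw [this]
    exact Finset.mul_mem_mul (Finset.mul_mem_mul (Eseq_symm e M n hz) (Eseq_symm e M n hb))
      (Eseq_symm e M n ha)
  obtain ⟨F, hEF, c, hann⟩ := hubs (E * E * E) h1E3 hsymE3
  have hFne : F.Nonempty := ⟨1, hEF h1E3⟩
  have hFEne : (F * E).Nonempty := ⟨1 * 1, Finset.mul_mem_mul (hEF h1E3) h1E⟩
  obtain ⟨gg, hgg1, hgg2⟩ := exists_boundary h1E (hinf n hn) hFEne
  refine ⟨c, F, gg, hEF, hann, ?_⟩
  intro h hh
  apply hann
  constructor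
  · have hm : gg * h ∈ F * (E * E * E) := by
      have h2 : gg * h ∈ F * E * E * E := Finset.mul_mem_mul hgg1 hh
      have : F * E * E * E = F * (E * E * E) := by
        rw [mul_assoc, mul_assoc, mul_assoc]
      rwa [this] at h2
    have : (gg * h : G) ∈ (↑(F * (E * E * E)) : Set G) := hm
    rwa [Finset.coe_mul] at this
  · intro hmem
    apply hgg2
    have : (gg * h) * h⁻¹ ∈ F * E := Finset.mul_mem_mul hmem (Eseq_symm e M n hh)
    simpa using this

end Aux5

section Aux6
open Filter Topology

variable {G : Type*} [Group G] [DecidableEq G] {A : Type*} {M : Finset G}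

lemma caseB_surjective [Countable G] [Fintype A] [Nonempty A]
    {s : G → ((M → A) → A)}
    (hG : Surjunctive G) (hubs : UniformlyBoundedSingularity s) (hinj : StablyInjective s)
    {e : ℕ → G} (he : Function.Surjective e)
    {n₀ : ℕ} (hinf : ∀ n, n₀ ≤ n →
      ¬ ((Subgroup.closure ((Eseq e M n : Finset G) : Set G) : Set G).Finite))
    {N : Finset G}
    (hN : ∀ p p', p ∈ orbitClosure s → p' ∈ orbitClosure s →
      ∀ z z' : G → A, (∀ h ∈ N, p h = p' h) → (∀ h ∈ N, nuca p z h = nuca p' z' h) →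
      z 1 = z' 1) :
    Surjective (nuca s) := by
  have hgd : ∀ k : ℕ, ∃ (c : (M → A) → A) (F : Finset G) (gg : G),
      (Eseq e M (k + n₀) * Eseq e M (k + n₀) * Eseq e M (k + n₀)) ⊆ F ∧
      (∀ g ∈ ((F : Set G) *
          ((Eseq e M (k + n₀) * Eseq e M (k + n₀) * Eseq e M (k + n₀) : Finset G) : Set G)) \
          (F : Set G), s g = c) ∧
      (∀ h ∈ Eseq e M (k + n₀), s (gg * h) = c) :=
    fun k => exists_good_data hubs e hinf (k + n₀) (by omega)
  choose cf Ff gf hEF hann hwin using hgd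
  obtain ⟨c, hcfib⟩ := Finite.exists_infinite_fiber cf
  have hcfib' : (cf ⁻¹' {c}).Infinite := Set.infinite_coe_iff.mp hcfib
  set cbar : G → ((M → A) → A) := fun _ => c with hcbar
  have hcK : cbar ∈ orbitClosure s := by
    rw [mem_orbitClosure_iff]
    intro Δ
    obtain ⟨i, hi⟩ := Eseq_exhaust_finset he M Δ
    obtain ⟨k, hk1, hk2⟩ := hcfib'.exists_gt i
    refine ⟨(gf k)⁻¹, fun h hh => ?_⟩
    rw [inv_inv]
    have hhE : h ∈ Eseq e M (k + n₀) := hi (k + n₀) (by omega) h hh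
    rw [hwin k h hhE]
    simpa using hk1
  have hcinj : Function.Injective (nuca cbar) := hinj cbar hcK
  have hcsurj : Surjective (nuca cbar) := by
    set eA := Fintype.equivFin A with heA
    set τB : (G → Fin (Fintype.card A)) → (G → Fin (Fintype.card A)) :=
      fun x g => eA (nuca cbar (fun g' => eA.symm (x g')) g) with hτB
    have hca : IsCellularAutomaton τB := by
      refine ⟨M, fun u => eA (c fun m => eA.symm (u m)), ?_⟩
      funext x g
      rfl
    have hinjB : Function.Injective τB := by
      intro x x' hxx
      have h1 : nuca cbar (fun g' => eA.symm (x g')) = nuca cbar (fun g' => eA.symm (x' g')) := by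
        funext g
        exact eA.injective (congrFun hxx g)
      have h2 := hcinj h1
      funext g
      exact eA.symm.injective (congrFun h2 g)
    have hsB := hG (Fin (Fintype.card A)) τB hca hinjB
    intro y
    obtain ⟨xB, hxB⟩ := hsB (fun g => eA (y g))
    exact ⟨fun g => eA.symm (xB g), funext fun g => eA.injective (congrFun hxB g)⟩
  have hUI : ∀ (v x : G → A) (g : G),
      (∀ nn ∈ N, nuca cbar v (g * nn) = nuca cbar x (g * nn)) → v g = x g := by
    intro v x g hvx
    have h1 : nuca cbar (shAct g⁻¹ v) = shAct g⁻¹ (nuca cbar v) := nuca_shAct cbar v g⁻¹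
    have h2 : nuca cbar (shAct g⁻¹ x) = shAct g⁻¹ (nuca cbar x) := nuca_shAct cbar x g⁻¹
    have hagg : ∀ h ∈ N, nuca cbar (shAct g⁻¹ v) h = nuca cbar (shAct g⁻¹ x) h := by
      intro h hh
      rw [h1, h2]
      show nuca cbar v (g⁻¹⁻¹ * h) = nuca cbar x (g⁻¹⁻¹ * h)
      rw [inv_inv]
      exact hvx h hh
    have h3 := hN cbar cbar hcK hcK _ _ (fun _ _ => rfl) hagg
    simpa [shAct] using h3
  apply surjective_of_dense
  intro y Δ
  obtain ⟨i, hi⟩ := Eseq_exhaust_finset he M (Δ ∪ N ∪ N⁻¹)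
  obtain ⟨k, hk1, hk2⟩ := hcfib'.exists_gt i
  set n := k + n₀ with hn
  set E := Eseq e M n with hE
  set F := Ff k with hF
  have hck : cf k = c := hk1
  have hEsub : ∀ g ∈ Δ ∪ N ∪ N⁻¹, g ∈ E := hi n (by omega)
  have hΔE : ∀ g ∈ Δ, g ∈ E := fun g hg => hEsub g (by simp [hg])
  have hNE : ∀ g ∈ N, g ∈ E := fun g hg => hEsub g (by simp [hg])
  have hNiE : ∀ g ∈ N⁻¹, g ∈ E := fun g hg => hEsub g (by simp [hg])
  have hEEEF : E * E * E ⊆ F := hEF k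
  have hEsubF : E ⊆ F := fun g hg => hEEEF (Eseq_self_sub_cube e M n hg)
  set s' : G → ((M → A) → A) := fun g => if g ∈ F then s g else c with hs'
  have hs'F : ∀ g ∈ F, s' g = s g := fun g hg => by simp [hs', hg]
  have hs'nF : ∀ g ∉ F, s' g = c := fun g hg => by simp [hs', hg]
  have hs'ann : ∀ g ∈ F * (E * E * E), s' g = s g := by
    intro g hg
    by_cases hgF : g ∈ F
    · exact hs'F g hgF
    · have hgm : g ∈ ((F : Set G) * ((E * E * E : Finset G) : Set G)) \ (F : Set G) := by
        constructor
        · have hx : g ∈ (↑(F * (E * E * E)) : Set G) := hg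
          rwa [Finset.coe_mul] at hx
        · exact hgF
      rw [hs'nF g hgF, hann k g hgm, hck]
  have hFN : ∀ g : G, g ∉ F * N⁻¹ → ∀ nn ∈ N, g * nn ∉ F := by
    intro g hg nn hnn hmem
    apply hg
    have hx : (g * nn) * nn⁻¹ ∈ F * N⁻¹ := Finset.mul_mem_mul hmem (Finset.inv_mem_inv hnn)
    simpa using hx
  have hout : ∀ (x : G → A) (h : G), h ∉ F → nuca s' x h = nuca cbar x h :=
    fun x h hh => nuca_congr (hs'nF h hh) (fun _ => rfl)
  have hstep1 : ∀ x x' : G → A, nuca s' x = nuca s' x' → ∀ g, g ∉ F * N⁻¹ → x g = x' g := by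
    intro x x' hxx g hg
    apply hUI
    intro nn hnn
    have hgn := hFN g hg nn hnn
    rw [← hout x _ hgn, ← hout x' _ hgn, hxx]
  have hs'inj : Function.Injective (nuca s') := by
    intro x x' hxx
    apply hinj s (self_mem_orbitClosure s)
    funext g
    by_cases hcase : ∀ m : M, g * (m : G) ∉ F * N⁻¹
    · exact nuca_congr rfl (fun m => hstep1 x x' hxx _ (hcase m))
    · push_neg at hcase
      obtain ⟨m, hm⟩ := hcase
      have hgmem : g ∈ F * (E * E * E) := by
        have h1 : g * (m : G) ∈ F * E :=
          Finset.mul_subset_mul_left (fun a ha => hNiE a ha) hm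
        have hmiE : ((m : G))⁻¹ ∈ E := Eseq_Minv e M n m.2
        have h2 := Finset.mul_mem_mul h1 hmiE
        have h3 : g ∈ F * E * E := by simpa using h2
        have h4 : g ∈ F * (E * E) := by rwa [← mul_assoc]
        have h5 : E * E ⊆ E * E * E := by
          intro a ha
          have := Finset.mul_mem_mul ha (Eseq_one e M n)
          simpa using this
        exact Finset.mul_subset_mul_left h5 h4
      calc nuca s x g = nuca s' x g := nuca_congr (hs'ann g hgmem).symm (fun _ => rfl)
        _ = nuca s' x' g := congrFun hxx g
        _ = nuca s x' g := nuca_congr (hs'ann g hgmem) (fun _ => rfl)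
  set ρ := Function.surjInv hcsurj with hρ
  have hρr : ∀ z : G → A, nuca cbar (ρ z) = z := fun z => Function.surjInv_eq hcsurj z
  set τ : (G → A) → (G → A) := fun x => ρ (nuca s' x) with hτ
  have hτinj : Function.Injective τ := by
    intro x x' hxx
    have h1 := congrArg (nuca cbar) hxx
    have h2 : nuca s' x = nuca s' x' := by
      rw [show nuca cbar (τ x) = nuca s' x from hρr (nuca s' x),
        show nuca cbar (τ x') = nuca s' x' from hρr (nuca s' x')] at h1
      exact h1
    exact hs'inj h2
  have hτid : ∀ (x : G → A) (g : G), g ∉ F * N⁻¹ → τ x g = x g := by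
    intro x g hg
    apply hUI
    intro nn hnn
    have hgn := hFN g hg nn hnn
    rw [show nuca cbar (τ x) = nuca s' x from hρr (nuca s' x), hout x _ hgn]
  have hτsurj := surjective_of_injective_of_id_off τ (F * N⁻¹) hτinj hτid
  have hs'surj : Surjective (nuca s') := by
    intro z
    obtain ⟨x, hx⟩ := hτsurj (ρ z)
    refine ⟨x, ?_⟩
    have h1 := congrArg (nuca cbar) hx
    rw [show nuca cbar (τ x) = nuca s' x from hρr (nuca s' x), hρr z] at h1
    exact h1
  obtain ⟨x, hx⟩ := hs'surj y
  refine ⟨x, fun g hg => ?_⟩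
  have hgF : g ∈ F := hEsubF (hΔE g hg)
  calc nuca s x g = nuca s' x g := nuca_congr (hs'F g hgF).symm (fun _ => rfl)
    _ = y g := congrFun hx g

end Aux6

section Aux7
open Filter Topology

variable {G : Type*} [Group G] {A : Type*} {M : Finset G}

open Classical in
/-- Local inversion rule. -/
noncomputable def invBody [Nonempty A] (M N : Finset G) (π : N → ((M → A) → A))
    (u : N → A) : A :=
  if h : ∃ x : G → A, ∀ nn : N, π nn (fun m => x ((nn : G) * (m : G))) = u nn then
    Classical.choose h 1 else Classical.ofNonempty

/-- The inverse configuration of local defining maps. -/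
noncomputable def invConf [Nonempty A] (N : Finset G) (p : G → ((M → A) → A)) :
    G → ((N → A) → A) :=
  fun g u => invBody M N (fun nn => p (g * nn)) u

lemma stablyInvertible_of [Nonempty A] {s : G → ((M → A) → A)}
    (hbij : ∀ p ∈ orbitClosure s, Function.Bijective (nuca p))
    {N : Finset G}
    (hN : ∀ p p', p ∈ orbitClosure s → p' ∈ orbitClosure s →
      ∀ z z' : G → A, (∀ h ∈ N, p h = p' h) → (∀ h ∈ N, nuca p z h = nuca p' z' h) →
      z 1 = z' 1) :
    StablyInvertible s := by
  classical
  have hkey : ∀ p, p ∈ orbitClosure s → ∀ (x₀ y : G → A), nuca p x₀ = y →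
      nuca (invConf N p) y = x₀ := by
    intro p hp x₀ y hxy
    funext g
    show invBody M N (fun nn => p (g * nn)) (fun nn => y (g * (nn : G))) = x₀ g
    have hwit : ∀ nn : N, (fun k => p (g * k)) (nn : G)
        (fun m => shAct g⁻¹ x₀ ((nn : G) * (m : G))) = y (g * (nn : G)) := by
      intro nn
      have hxe : (fun m : M => shAct g⁻¹ x₀ ((nn : G) * (m : G))) =
          fun m : M => x₀ ((g * (nn : G)) * (m : G)) := by
        funext m
        simp [shAct, mul_assoc]
      show p (g * nn) (fun m => shAct g⁻¹ x₀ ((nn : G) * (m : G))) = y (g * (nn : G))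
      rw [hxe, ← hxy]
      rfl
    have hex : ∃ x : G → A, ∀ nn : N,
        (fun nn : N => p (g * nn)) nn (fun m => x ((nn : G) * (m : G))) =
        (fun nn : N => y (g * (nn : G))) nn :=
      ⟨shAct g⁻¹ x₀, hwit⟩
    rw [invBody, dif_pos hex]
    have hspec := Classical.choose_spec hex
    have hpg : (fun k => p (g * k)) ∈ orbitClosure s := by
      have hsh := shAct_mem_orbitClosure hp g⁻¹
      have heq : shAct g⁻¹ p = fun k => p (g * k) := by
        funext k; simp [shAct]
      rwa [heq] at hsh
    have hagg : ∀ h ∈ N, nuca (fun k => p (g * k)) (Classical.choose hex) h =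
        nuca (fun k => p (g * k)) (shAct g⁻¹ x₀) h := by
      intro h hh
      have h1 := hspec ⟨h, hh⟩
      have h2 := hwit ⟨h, hh⟩
      exact h1.trans h2.symm
    have h3 := hN _ _ hpg hpg _ _ (fun _ _ => rfl) hagg
    rw [h3]
    simp [shAct]
  refine ⟨N, invConf N s, ?_⟩
  intro p hp
  refine ⟨invConf N p, ?_, ?_, ?_⟩
  · rw [mem_orbitClosure_iff]
    intro Δ
    obtain ⟨a, ha⟩ := (mem_orbitClosure_iff s p).mp hp (Δ * N)
    refine ⟨a, fun h hh => ?_⟩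
    funext u
    show invBody M N (fun nn => s ((a⁻¹ * h) * nn)) u = invBody M N (fun nn => p (h * nn)) u
    congr 1
    funext nn
    rw [mul_assoc]
    exact ha _ (Finset.mul_mem_mul hh nn.2)
  · funext y
    obtain ⟨x₀, hx₀⟩ := (hbij p hp).2 y
    show nuca p (nuca (invConf N p) y) = y
    rw [hkey p hp x₀ y hx₀, hx₀]
  · funext x
    show nuca (invConf N p) (nuca p x) = x
    exact hkey p hp x _ rfl

end Aux7


/-- Theorem B: over a countable surjunctive group universe and a
finite alphabet, every stably injective NUCA with finite memory whose
configuration of local defining maps has uniformly bounded singularity is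
stably invertible. -/
theorem theoremB {G : Type*} [Group G] [Countable G] (hG : Surjunctive G)
    {A : Type*} [Fintype A] {M : Finset G} (s : G → ((M → A) → A))
    (hubs : UniformlyBoundedSingularity s) (hinj : StablyInjective s) :
    StablyInvertible s := by
  classical
  rcases isEmpty_or_nonempty A with hA | hA
  · refine ⟨{1}, fun _ u => (hA.false (u ⟨1, Finset.mem_singleton_self 1⟩)).elim, ?_⟩
    intro p hp
    refine ⟨_, self_mem_orbitClosure _, ?_, ?_⟩
    · funext x; exact (hA.false (x 1)).elim
    · funext x; exact (hA.false (x 1)).elim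
  · haveI : Nonempty G := ⟨1⟩
    obtain ⟨e, he⟩ := exists_surjective_nat G
    obtain ⟨N, hN⟩ := exists_uniform_window hinj
    have hbij : ∀ p ∈ orbitClosure s, Function.Bijective (nuca p) := by
      by_cases hLF : ∃ n : ℕ,
          ¬ ((Subgroup.closure ((Eseq e M n : Finset G) : Set G) : Set G).Finite)
      · obtain ⟨n₁, hn₁⟩ := hLF
        have hinf : ∀ n, n₁ ≤ n →
            ¬ ((Subgroup.closure ((Eseq e M n : Finset G) : Set G) : Set G).Finite) := by
          intro n hn hfin
          exact hn₁ (hfin.subset (SetLike.coe_subset_coe.mpr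
            (Subgroup.closure_mono (Finset.coe_subset.mpr (Eseq_mono e M hn)))))
        have hssurj := caseB_surjective hG hubs hinj he hinf hN
        have hall := surj_all hssurj
        exact fun p hp => ⟨hinj p hp, hall p hp⟩
      · push_neg at hLF
        intro p hp
        refine ⟨hinj p hp, ?_⟩
        exact caseA_surjective (Subgroup.closure ((Eseq e M 0 : Finset G) : Set G))
          (by simpa using hLF 0)
          (fun m => Subgroup.subset_closure (by exact_mod_cast Eseq_M e M 0 m.2))
          (hinj p hp)
    exact stablyInvertible_of hbij hN
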